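/- Let u : U ⟶ I be a central idempotent in a monoidal category C. Then u is a split monomorphism (i.e. there exists e : I ⟶ U with u ≫ e = 𝟙_U) if and only if U is self-dual with evaluation (u ⊗ u) ≫ λ_I : U ⊗ U ⟶ I; that is, if and only if there exists a coevaluation η : I ⟶ U ⊗ U such that η and ε := (u ⊗ u) ≫ λ_I satisfy the two zigzag (triangle) identities exhibiting an adjunction U ⊣ U. -/

import Mathlib

open CategoryTheory MonoidalCategory

/-- A central idempotent in a monoidal category. -/
structure IsCentralIdempotent {C : Type*} [Category C] [MonoidalCategory C]
    {U : C} (u : U ⟶ 𝟙_ C) (σ : HalfBraiding U) : Prop where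
  central : (u ▷ U) ≫ (λ_ U).hom = (U ◁ u) ≫ (ρ_ U).hom
  isIso : IsIso ((u ▷ U) ≫ (λ_ U).hom)
  compat : ∀ A : C, (σ.β A).hom ≫ (A ◁ u) ≫ (ρ_ A).hom = (u ▷ A) ≫ (λ_ A).hom

section Aux

variable {C : Type*} [Category C] [MonoidalCategory C] {U : C}

/-- `ε = m ≫ u` where `m = (u ▷ U) ≫ λ`. -/
lemma ci_eps_eq (u : U ⟶ 𝟙_ C) :
    (u ⊗ₘ u) ≫ (λ_ (𝟙_ C)).hom = ((u ▷ U) ≫ (λ_ U).hom) ≫ u := by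
  rw [MonoidalCategory.tensorHom_def]
  simp

/-- Associativity of the multiplication `m = (u ▷ U) ≫ λ`. -/
lemma ci_assoc (u : U ⟶ 𝟙_ C) (hc : (u ▷ U) ≫ (λ_ U).hom = (U ◁ u) ≫ (ρ_ U).hom) :
    (α_ U U U).hom ≫ (U ◁ ((u ▷ U) ≫ (λ_ U).hom)) ≫ ((u ▷ U) ≫ (λ_ U).hom) =
      (((u ▷ U) ≫ (λ_ U).hom) ▷ U) ≫ ((u ▷ U) ≫ (λ_ U).hom) := by
  conv_rhs => rw [hc]
  simp only [MonoidalCategory.whiskerLeft_comp, comp_whiskerRight, Category.assoc]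
  rw [← associator_naturality_middle_assoc, MonoidalCategory.triangle_assoc, hc]

/-- Right whiskering by `U` is faithful on endomorphisms of `U`, given the idempotent. -/
lemma ci_cancel (u : U ⟶ 𝟙_ C) (hc : (u ▷ U) ≫ (λ_ U).hom = (U ◁ u) ≫ (ρ_ U).hom)
    [IsIso ((u ▷ U) ≫ (λ_ U).hom)] (f : U ⟶ U) (hf : f ▷ U = 𝟙 _) : f = 𝟙 U := by
  have key : (f ▷ U) ≫ ((u ▷ U) ≫ (λ_ U).hom) = ((u ▷ U) ≫ (λ_ U).hom) ≫ f := by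
    rw [hc, ← Category.assoc, ← whisker_exchange]
    simp
  rw [hf, Category.id_comp] at key
  exact (cancel_epi ((u ▷ U) ≫ (λ_ U).hom)).mp (by simpa using key.symm)

end Aux

/-- A central idempotent `u : U ⟶ I` is a split monomorphism if and only if `U` is self-dual
with evaluation `(u ⊗ₘ u) ≫ λ_I`, i.e. there exists a coevaluation `η : I ⟶ U ⊗ U` satisfying
the two zigzag identities exhibiting an adjunction `U ⊣ U`. -/
theorem stmt13 {C : Type*} [Category C] [MonoidalCategory C]
    {U : C} (u : U ⟶ 𝟙_ C) (σ : HalfBraiding U) (h : IsCentralIdempotent u σ) :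
    (∃ e : 𝟙_ C ⟶ U, u ≫ e = 𝟙 U) ↔
    (∃ η : 𝟙_ C ⟶ U ⊗ U,
      (U ◁ η) ≫ (α_ U U U).inv ≫ (((u ⊗ₘ u) ≫ (λ_ (𝟙_ C)).hom) ▷ U) =
        (ρ_ U).hom ≫ (λ_ U).inv ∧
      (η ▷ U) ≫ (α_ U U U).hom ≫ (U ◁ ((u ⊗ₘ u) ≫ (λ_ (𝟙_ C)).hom)) =
        (λ_ U).hom ≫ (ρ_ U).inv) := by
  have hc := h.central
  haveI hm : IsIso ((u ▷ U) ≫ (λ_ U).hom) := h.isIso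
  set m : U ⊗ U ⟶ U := (u ▷ U) ≫ (λ_ U).hom with hmdef
  have hE : (u ⊗ₘ u) ≫ (λ_ (𝟙_ C)).hom = m ≫ u := ci_eps_eq u
  have hA : (α_ U U U).hom ≫ (U ◁ m) ≫ m = (m ▷ U) ≫ m := ci_assoc u h.central
  have hiR : IsIso (u ▷ U) := by
    have : u ▷ U = m ≫ (λ_ U).inv := by rw [hmdef]; simp
    rw [this]; infer_instance
  have hiL : IsIso (U ◁ u) := by
    have : U ◁ u = m ≫ (ρ_ U).inv := by rw [hc]; simp
    rw [this]; infer_instance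
  constructor
  · rintro ⟨e, he⟩
    have hR : (e ▷ U) ≫ (u ▷ U) = 𝟙 _ := by
      have h1 : (u ▷ U) ≫ (e ▷ U) = 𝟙 _ := by
        rw [← comp_whiskerRight, he]; simp
      exact (IsIso.inv_eq_of_hom_inv_id h1 ▸ IsIso.inv_hom_id (u ▷ U))
    have hL : (U ◁ e) ≫ (U ◁ u) = 𝟙 _ := by
      have h1 : (U ◁ u) ≫ (U ◁ e) = 𝟙 _ := by
        rw [← MonoidalCategory.whiskerLeft_comp, he]; simp
      exact (IsIso.inv_eq_of_hom_inv_id h1 ▸ IsIso.inv_hom_id (U ◁ u))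
    refine ⟨e ≫ inv m, ?_, ?_⟩
    · -- first zigzag
      rw [← cancel_mono (λ_ U).hom]
      simp only [Category.assoc, Iso.inv_hom_id, Category.comp_id]
      have hrw : ((u ⊗ₘ u) ≫ (λ_ (𝟙_ C)).hom) ▷ U ≫ (λ_ U).hom = (m ▷ U) ≫ m := by
        rw [hE, comp_whiskerRight, hmdef]; simp only [Category.assoc]
      rw [hrw, ← hA, Iso.inv_hom_id_assoc, ← MonoidalCategory.whiskerLeft_comp_assoc,
        Category.assoc, IsIso.inv_hom_id, Category.comp_id, hc,
        ← Category.assoc, hL, Category.id_comp]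
    · -- second zigzag
      rw [← cancel_mono (ρ_ U).hom]
      simp only [Category.assoc, Iso.inv_hom_id, Category.comp_id]
      have hrw : U ◁ ((u ⊗ₘ u) ≫ (λ_ (𝟙_ C)).hom) ≫ (ρ_ U).hom = (U ◁ m) ≫ m := by
        rw [hE, MonoidalCategory.whiskerLeft_comp, hc]; simp only [Category.assoc]
      rw [hrw, hA, ← comp_whiskerRight_assoc, Category.assoc, IsIso.inv_hom_id,
        Category.comp_id, hmdef, ← Category.assoc, hR, Category.id_comp]
  · rintro ⟨η, _, hz2⟩
    refine ⟨η ≫ m, ?_⟩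
    have key : ((η ≫ m) ▷ U) ≫ m = (λ_ U).hom := by
      have h2 := hz2
      rw [← cancel_mono (ρ_ U).hom] at h2
      simp only [Category.assoc, Iso.inv_hom_id, Category.comp_id] at h2
      have hrw : U ◁ ((u ⊗ₘ u) ≫ (λ_ (𝟙_ C)).hom) ≫ (ρ_ U).hom = (U ◁ m) ≫ m := by
        rw [hE, MonoidalCategory.whiskerLeft_comp, hc]; simp only [Category.assoc]
      rw [hrw, hA] at h2
      simpa [comp_whiskerRight] using h2
    have hR : ((η ≫ m) ▷ U) ≫ (u ▷ U) = 𝟙 _ := by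
      have h1 : ((η ≫ m) ▷ U) ≫ (u ▷ U) ≫ (λ_ U).hom = (λ_ U).hom := by
        rw [← hmdef]; simpa using key
      calc ((η ≫ m) ▷ U) ≫ (u ▷ U)
          = (((η ≫ m) ▷ U) ≫ (u ▷ U) ≫ (λ_ U).hom) ≫ (λ_ U).inv := by simp
        _ = 𝟙 _ := by rw [h1]; simp
    have hinv : (u ▷ U) ≫ ((η ≫ m) ▷ U) = 𝟙 _ :=
      (IsIso.inv_eq_of_inv_hom_id hR ▸ IsIso.hom_inv_id (u ▷ U))
    have hfin : (u ≫ (η ≫ m)) ▷ U = 𝟙 _ := by rw [comp_whiskerRight]; exact hinv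
    exact @ci_cancel _ _ _ _ u h.central h.isIso _ hfin
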